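/- For all n ≥ 0 and k ≥ 1, the matching numbers of the complete graph satisfy m(n,k-1) · m(n,k+1) ≤ m(n,k)², i.e., the sequence {m(n,k)}_{k≥0} is log-concave. -/
import Mathlib


/-- A matching in the complete graph `K_m` on vertex set `Fin m`. -/
def IsMatching {m : ℕ} (M : Finset (Finset (Fin m))) : Prop :=
  (∀ e ∈ M, e.card = 2) ∧ ∀ e ∈ M, ∀ f ∈ M, e ≠ f → Disjoint e f

/-- `matchNum m k` is the number of `k`-matchings in the complete graph `K_m`. -/
noncomputable def matchNum (m k : ℕ) : ℕ :=
  Nat.card {M : Finset (Finset (Fin m)) // IsMatching M ∧ M.card = k}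

open Finset in
open Classical in
/-- The set of `k`-matchings in `K_n` as a `Finset`. -/
noncomputable def matchSet (n k : ℕ) : Finset (Finset (Finset (Fin n))) :=
  Finset.univ.filter (fun M => IsMatching M ∧ M.card = k)

open Classical in
lemma matchNum_eq (n k : ℕ) : matchNum n k = (matchSet n k).card := by
  rw [matchNum, matchSet, Nat.card_eq_fintype_card, Fintype.card_subtype]

lemma mem_matchSet {n k : ℕ} {M : Finset (Finset (Fin n))} :
    M ∈ matchSet n k ↔ IsMatching M ∧ M.card = k := by
  classical
  simp [matchSet]

lemma card_biUnion_matching {n k : ℕ} {M : Finset (Finset (Fin n))}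
    (h : IsMatching M) (hc : M.card = k) : (M.biUnion id).card = 2 * k := by
  classical
  rw [Finset.card_biUnion (t := id) (fun x hx y hy hxy => h.2 x hx y hy hxy)]
  simp only [id_eq]
  rw [Finset.sum_congr rfl (fun e he => h.1 e he), Finset.sum_const, hc]
  ring

open Finset in
lemma matchNum_rec (n k : ℕ) :
    (k + 1) * matchNum n (k + 1) = matchNum n k * ((n - 2 * k).choose 2) := by
  classical
  rw [matchNum_eq, matchNum_eq]
  have lhs : (k + 1) * (matchSet n (k + 1)).card
      = ((matchSet n (k + 1)).sigma (fun M => M)).card := by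
    rw [Finset.card_sigma, Finset.sum_congr rfl
      (fun M hM => (mem_matchSet.1 hM).2), Finset.sum_const, smul_eq_mul, mul_comm]
  have rhs : (matchSet n k).card * ((n - 2 * k).choose 2)
      = ((matchSet n k).sigma
          (fun M => (Finset.univ \ M.biUnion id).powersetCard 2)).card := by
    rw [Finset.card_sigma, Finset.sum_congr rfl (fun M hM => by
      rw [Finset.card_powersetCard, Finset.card_sdiff_of_subset (Finset.subset_univ _),
        Finset.card_univ, Fintype.card_fin,
        card_biUnion_matching (mem_matchSet.1 hM).1 (mem_matchSet.1 hM).2]),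
      Finset.sum_const, smul_eq_mul]
  rw [lhs, rhs]
  refine Finset.card_bij' (fun p hp => ⟨p.1.erase p.2, p.2⟩)
    (fun q hq => ⟨insert q.2 q.1, q.2⟩) ?_ ?_ ?_ ?_
  · rintro ⟨M, e⟩ hp
    rw [Finset.mem_sigma] at hp
    obtain ⟨hM, he⟩ := hp
    obtain ⟨⟨h1, h2⟩, hcard⟩ := mem_matchSet.1 hM
    rw [Finset.mem_sigma]
    constructor
    · refine mem_matchSet.2 ⟨⟨fun f hf => h1 f (Finset.mem_of_mem_erase hf),
        fun f hf g hg hfg => h2 f (Finset.mem_of_mem_erase hf)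
          g (Finset.mem_of_mem_erase hg) hfg⟩, ?_⟩
      rw [Finset.card_erase_of_mem he, hcard]
      omega
    · rw [Finset.mem_powersetCard]
      refine ⟨?_, h1 e he⟩
      intro x hx
      rw [Finset.mem_sdiff]
      refine ⟨Finset.mem_univ x, ?_⟩
      intro hxu
      rw [Finset.mem_biUnion] at hxu
      obtain ⟨f, hf, hxf⟩ := hxu
      have hne : f ≠ e := Finset.ne_of_mem_erase hf
      exact Finset.disjoint_left.1
        (h2 e he f (Finset.mem_of_mem_erase hf) hne.symm) hx hxf
  · rintro ⟨M, e⟩ hq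
    rw [Finset.mem_sigma] at hq
    obtain ⟨hM, he⟩ := hq
    obtain ⟨⟨h1, h2⟩, hcard⟩ := mem_matchSet.1 hM
    rw [Finset.mem_powersetCard] at he
    obtain ⟨hsub, hcard2⟩ := he
    have hdisj : ∀ f ∈ M, Disjoint e f := by
      intro f hf
      rw [Finset.disjoint_left]
      intro x hx hxf
      have := hsub hx
      rw [Finset.mem_sdiff] at this
      exact this.2 (Finset.mem_biUnion.2 ⟨f, hf, hxf⟩)
    have heM : e ∉ M := by
      intro hcon
      have h0 : e = ⊥ := disjoint_self.1 (hdisj e hcon)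
      rw [h0] at hcard2
      simp at hcard2
    rw [Finset.mem_sigma]
    constructor
    · refine mem_matchSet.2 ⟨⟨?_, ?_⟩, ?_⟩
      · intro f hf
        rcases Finset.mem_insert.1 hf with h | h
        · rw [h]; exact hcard2
        · exact h1 f h
      · intro f hf g hg hfg
        rcases Finset.mem_insert.1 hf with h | h <;>
          rcases Finset.mem_insert.1 hg with h' | h'
        · exact absurd (h.trans h'.symm) hfg
        · rw [h]; exact hdisj g h'
        · rw [h']; exact (hdisj f h).symm
        · exact h2 f h g h' hfg
      · rw [Finset.card_insert_of_notMem heM, hcard]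
    · exact Finset.mem_insert_self e M
  · rintro ⟨M, e⟩ hp
    rw [Finset.mem_sigma] at hp
    simp only [Sigma.mk.inj_iff, heq_eq_eq]
    exact ⟨Finset.insert_erase hp.2, trivial⟩
  · rintro ⟨M, e⟩ hq
    rw [Finset.mem_sigma] at hq
    obtain ⟨hM, he⟩ := hq
    rw [Finset.mem_powersetCard] at he
    have heM : e ∉ M := by
      intro hcon
      have : Disjoint e e := by
        rw [Finset.disjoint_left]
        intro x hx hx'
        have := he.1 hx
        rw [Finset.mem_sdiff] at this
        exact this.2 (Finset.mem_biUnion.2 ⟨e, hcon, hx⟩)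
      have h0 : e = ⊥ := disjoint_self.1 this
      rw [h0] at he
      simp at he
    simp only [Sigma.mk.inj_iff, heq_eq_eq]
    exact ⟨Finset.erase_insert heM, trivial⟩

/-- The matching numbers of the complete graph form a log-concave sequence in `k`. -/
theorem stmt_10 (n k : ℕ) (hk : 1 ≤ k) :
    matchNum n (k - 1) * matchNum n (k + 1) ≤ matchNum n k ^ 2 := by
  obtain ⟨j, rfl⟩ : ∃ j, k = j + 1 := ⟨k - 1, (Nat.succ_pred_eq_of_pos hk).symm⟩
  simp only [Nat.add_sub_cancel]
  have r1 := matchNum_rec n j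
  have r2 := matchNum_rec n (j + 1)
  have key : (j + 1) * (j + 2) * (matchNum n j * matchNum n (j + 2))
      ≤ (j + 1) * (j + 2) * (matchNum n (j + 1) ^ 2) := by
    have e1 : (j + 1) * (j + 2) * (matchNum n j * matchNum n (j + 2))
        = matchNum n j * (j + 1) * ((j + 1 + 1) * matchNum n (j + 1 + 1)) := by ring_nf
    have e2 : (j + 1) * (j + 2) * (matchNum n (j + 1) ^ 2)
        = ((j + 1) * matchNum n (j + 1)) * ((j + 2) * matchNum n (j + 1)) := by ring
    rw [e1, r2, e2, r1]
    have hmono : (n - 2 * (j + 1)).choose 2 ≤ (n - 2 * j).choose 2 :=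
      Nat.choose_le_choose 2 (Nat.sub_le_sub_left (by omega) n)
    calc matchNum n j * (j + 1) * (matchNum n (j + 1) * (n - 2 * (j + 1)).choose 2)
        ≤ matchNum n j * (j + 2) * (matchNum n (j + 1) * (n - 2 * j).choose 2) := by
          apply Nat.mul_le_mul
          · exact Nat.mul_le_mul_left _ (by omega)
          · exact Nat.mul_le_mul_left _ hmono
      _ = matchNum n j * (n - 2 * j).choose 2 * ((j + 2) * matchNum n (j + 1)) := by ring
  exact Nat.le_of_mul_le_mul_left key (by positivity)
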